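/- Let Γ and Ξ be metric graphs (with path metrics, all edges of length 1), let p ∈ Γ, and let R > 3 be an integer. Suppose f : B_R(p) → Ξ is an injective simplicial map defined on the closed ball of radius R about p, which is a local homeomorphism at every point of B_{R−1}(p). Then f restricts to an isometry from B_{R/3}(p) onto B_{R/3}(f(p)). -/
import Mathlib


open SimpleGraph

/-- **Lemma.** Let `Γ`, `Ξ` be (connected) metric graphs with path metrics (edges of length 1),
`p ∈ Γ`, and let `R > 3` be an integer.  If `f` is an injective simplicial map defined on the
closed ball `B_R(p)` which is a local homeomorphism at every point of `B_{R−1}(p)`, then `f`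
restricts to an isometry from `B_{R/3}(p)` onto `B_{R/3}(f p)`. -/
theorem ball_isometry_from_local_homeo
    {V W : Type*} (G : SimpleGraph V) (H : SimpleGraph W)
    (hG : G.Connected) (hH : H.Connected)
    (p : V) (R : ℕ) (hR : 3 < R) (f : V → W)
    -- `f` is simplicial on the ball `B_R(p)`
    (hsimp : ∀ u v, G.dist p u ≤ R → G.dist p v ≤ R → G.Adj u v → H.Adj (f u) (f v))
    -- `f` is injective on `B_R(p)`
    (hinj : Set.InjOn f {v | G.dist p v ≤ R})
    -- `f` is a local homeomorphism at every point of `B_{R-1}(p)`: it maps the star of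
    -- each such vertex onto the star of its image
    (hloc : ∀ v, G.dist p v ≤ R - 1 →
      ∀ w, H.Adj (f v) w → ∃ u, G.Adj v u ∧ f u = w) :
    (∀ x y, (G.dist p x : ℝ) ≤ R / 3 → (G.dist p y : ℝ) ≤ R / 3 →
      H.dist (f x) (f y) = G.dist x y) ∧
    f '' {x | (G.dist p x : ℝ) ≤ R / 3} = {y | (H.dist (f p) y : ℝ) ≤ R / 3} := by
  classical
  -- Lifting lemma: any walk in `H` starting at `f x` which (together with the distance of `x`
  -- from `p`) fits inside the ball of radius `R` lifts to a walk in `G` starting at `x`.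
  have lift : ∀ (n : ℕ) (x : V) (w : W) (q : H.Walk (f x) w), q.length ≤ n →
      G.dist p x + q.length ≤ R →
      ∃ u, f u = w ∧ G.dist x u ≤ q.length ∧ G.dist p u ≤ G.dist p x + q.length := by
    intro n
    induction n with
    | zero =>
      intro x w q hlen hball
      cases q with
      | nil => exact ⟨x, rfl, by simp, by simp⟩
      | cons hadj q' => simp at hlen
    | succ n ih =>
      intro x w q hlen hball
      cases q with
      | nil => exact ⟨x, rfl, by simp, by simp⟩
      | @cons _ b _ hadj q' =>
        simp only [Walk.length_cons] at hlen hball ⊢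
        have hx1 : G.dist p x ≤ R - 1 := by omega
        obtain ⟨u₁, hu₁adj, hu₁⟩ := hloc x hx1 b hadj
        have hxu₁ : G.dist x u₁ ≤ 1 := by
          have := SimpleGraph.dist_le hu₁adj.toWalk
          simpa using this
        have hpu₁ : G.dist p u₁ ≤ G.dist p x + 1 := by
          have := hG.dist_triangle (u := p) (v := x) (w := u₁)
          omega
        subst hu₁
        obtain ⟨u, hu, hdu, hpu⟩ := ih u₁ w q' (by omega) (by omega)
        refine ⟨u, hu, ?_, ?_⟩
        · have := hG.dist_triangle (u := x) (v := u₁) (w := u)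
          omega
        · have := hG.dist_triangle (u := p) (v := u₁) (w := u)
          omega
  -- Pushing lemma : a walk in `G` staying in the ball of radius `R` maps to a walk in `H`.
  have push : ∀ (x y : V) (q : G.Walk x y), (∀ v ∈ q.support, G.dist p v ≤ R) →
      ∃ q' : H.Walk (f x) (f y), q'.length = q.length := by
    intro x y q
    induction q with
    | nil => intro _; exact ⟨Walk.nil, rfl⟩
    | @cons a b c hadj q ih =>
      intro hsup
      obtain ⟨q', hq'⟩ := ih (fun v hv => hsup v (by simp [hv]))
      refine ⟨Walk.cons (hsimp a b (hsup a (by simp)) (hsup b ?_) hadj) q', by simp [hq']⟩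
      simp [Walk.support_cons, Walk.start_mem_support]
  have hR3 : ∀ d : ℕ, (d : ℝ) ≤ R / 3 → 3 * d ≤ R := by
    intro d hd
    have : (3 : ℝ) * d ≤ R := by linarith
    exact_mod_cast this
  -- Part 1: distances are preserved on the ball of radius R/3.
  have key : ∀ x y, (G.dist p x : ℝ) ≤ R / 3 → (G.dist p y : ℝ) ≤ R / 3 →
      H.dist (f x) (f y) = G.dist x y := by
    intro x y hx hy
    have hx' : 3 * G.dist p x ≤ R := hR3 _ hx
    have hy' : 3 * G.dist p y ≤ R := hR3 _ hy
    have hxy : G.dist x y ≤ G.dist p x + G.dist p y := by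
      have h1 := hG.dist_triangle (u := x) (v := p) (w := y)
      have h2 : G.dist x p = G.dist p x := SimpleGraph.dist_comm
      omega
    -- upper bound
    obtain ⟨q, hq⟩ := hG.exists_walk_length_eq_dist x y
    have hsupp : ∀ v ∈ q.support, G.dist p v ≤ R := by
      intro v hv
      have h1 : G.dist x v ≤ q.length :=
        le_trans (SimpleGraph.dist_le (q.takeUntil v hv)) (Walk.length_takeUntil_le q hv)
      have h2 := hG.dist_triangle (u := p) (v := x) (w := v)
      omega
    obtain ⟨q', hq'⟩ := push x y q hsupp
    have hub : H.dist (f x) (f y) ≤ G.dist x y := by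
      have := SimpleGraph.dist_le q'
      omega
    -- lower bound
    obtain ⟨r, hr⟩ := hH.exists_walk_length_eq_dist (f x) (f y)
    obtain ⟨u, hu, hdu, hpu⟩ := lift r.length x (f y) r le_rfl (by omega)
    have huy : u = y := hinj (by simp only [Set.mem_setOf_eq]; omega)
      (by simp only [Set.mem_setOf_eq]; omega) hu
    subst huy
    omega
  refine ⟨key, ?_⟩
  apply Set.Subset.antisymm
  · rintro y ⟨x, hx, rfl⟩
    have hpp : (G.dist p p : ℝ) ≤ R / 3 := by
      rw [SimpleGraph.dist_self]
      simp only [Nat.cast_zero]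
      positivity
    have := key p x hpp hx
    simpa [this] using hx
  · intro y hy
    simp only [Set.mem_setOf_eq] at hy
    have hy' : 3 * H.dist (f p) y ≤ R := hR3 _ hy
    obtain ⟨r, hr⟩ := hH.exists_walk_length_eq_dist (f p) y
    have hpp : G.dist p p = 0 := SimpleGraph.dist_self
    obtain ⟨u, hu, hdu, hpu⟩ := lift r.length p y r le_rfl (by omega)
    refine ⟨u, ?_, hu⟩
    simp only [Set.mem_setOf_eq]
    have h3 : 3 * G.dist p u ≤ R := by omega
    have : (3 : ℝ) * (G.dist p u : ℝ) ≤ R := by exact_mod_cast h3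
    linarith
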